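/- Let τ be an infinite cardinal and let X_α be a nonempty compact Hausdorff space for each α ∈ A, where |A| = τ. Then the topological sum X = ⊕{X_α : α ∈ A} is almost a_{<τ}-subcompact, i.e., for every S ⊆ X with |S| < τ there is a condensation from X \ S onto a compact Hausdorff space. -/

import Mathlib

open Cardinal Topology

universe u

/-- A Hausdorff space is *subcompact* if it admits a condensation (continuous bijection)
onto a compact Hausdorff space. -/
def Subcompact (X : Type u) [TopologicalSpace X] : Prop :=
  ∃ (Y : Type u) (_ : TopologicalSpace Y), CompactSpace Y ∧ T2Space Y ∧
    ∃ f : X → Y, Continuous f ∧ Function.Bijective f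

/-- A compact Hausdorff space `X` is an `a_τ`-space if for every `C ⊆ X` with `#C ≤ τ`
there is a condensation from the subspace `X \ C` onto a compact Hausdorff space. -/
def ATauSpace (τ : Cardinal.{u}) (X : Type u) [TopologicalSpace X] : Prop :=
  CompactSpace X ∧ T2Space X ∧ ∀ C : Set X, #C ≤ τ → Subcompact ↥(Cᶜ)

/-- A compact Hausdorff space `X` is a strictly `a_τ`-space if for every `C ⊆ X` with
`#C ≤ τ` there is a condensation from `X \ C` onto a compact Hausdorff space `K`
extending to a continuous map `X → K` (encoded: a continuous `g : X → K` whose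
restriction to `X \ C` is bijective). -/
def StrictATauSpace (τ : Cardinal.{u}) (X : Type u) [TopologicalSpace X] : Prop :=
  CompactSpace X ∧ T2Space X ∧ ∀ C : Set X, #C ≤ τ →
    ∃ (K : Type u) (_ : TopologicalSpace K), CompactSpace K ∧ T2Space K ∧
      ∃ g : X → K, Continuous g ∧ Function.Bijective fun x : ↥(Cᶜ) => g x

/-- A Hausdorff space `X` is `a_τ`-subcompact if for every `C ⊆ X` with `#C ≤ τ` there
is a condensation from `X \ C` onto an `a_τ`-space. -/
def ATauSubcompact (τ : Cardinal.{u}) (X : Type u) [TopologicalSpace X] : Prop :=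
  ∀ C : Set X, #C ≤ τ →
    ∃ (Y : Type u) (_ : TopologicalSpace Y), ATauSpace τ Y ∧
      ∃ f : ↥(Cᶜ) → Y, Continuous f ∧ Function.Bijective f

/-- A Hausdorff space `X` is strictly `a_τ`-subcompact if for every `C ⊆ X` with `#C ≤ τ`
there is a condensation from `X \ C` onto a strictly `a_τ`-space `Y` extending to a
continuous map `X → Y`. -/
def StrictATauSubcompact (τ : Cardinal.{u}) (X : Type u) [TopologicalSpace X] : Prop :=
  ∀ C : Set X, #C ≤ τ →
    ∃ (Y : Type u) (_ : TopologicalSpace Y), StrictATauSpace τ Y ∧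
      ∃ g : X → Y, Continuous g ∧ Function.Bijective fun x : ↥(Cᶜ) => g x

/-- A Hausdorff space `X` is almost strictly `a_τ`-subcompact if for every `C ⊆ X` with
`#C ≤ τ` there is a condensation from `X \ C` onto a compact Hausdorff space `Y`
extending to a continuous map `X → Y`. -/
def AlmostStrictATauSubcompact (τ : Cardinal.{u}) (X : Type u) [TopologicalSpace X] : Prop :=
  ∀ C : Set X, #C ≤ τ →
    ∃ (Y : Type u) (_ : TopologicalSpace Y), CompactSpace Y ∧ T2Space Y ∧
      ∃ g : X → Y, Continuous g ∧ Function.Bijective fun x : ↥(Cᶜ) => g x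



open Set Function

theorem Subcompact.of_condensation {X Y : Type u} [TopologicalSpace X] [TopologicalSpace Y]
    (f : X → Y) (hc : Continuous f) (hb : Function.Bijective f) (h : Subcompact Y) :
    Subcompact X := by
  obtain ⟨Z, tZ, h1, h2, g, hg, hgb⟩ := h
  exact ⟨Z, tZ, h1, h2, g ∘ f, hg.comp hc, hgb.comp hb⟩

theorem sigma_locallyCompactSpace {ι : Type*} {π : ι → Type*} [∀ i, TopologicalSpace (π i)]
    [∀ i, LocallyCompactSpace (π i)] : LocallyCompactSpace (Σ i, π i) := by
  constructor
  rintro ⟨i, x⟩ n hn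
  rw [Sigma.nhds_mk, Filter.mem_map] at hn
  obtain ⟨k, hk1, hk2, hk3⟩ := LocallyCompactSpace.local_compact_nhds x _ hn
  refine ⟨Sigma.mk i '' k, ?_, ?_, hk3.image continuous_sigmaMk⟩
  · rw [Sigma.nhds_mk, Filter.mem_map]
    exact Filter.mem_of_superset hk1 (Set.subset_preimage_image _ _)
  · exact Set.image_subset_iff.mpr hk2

theorem subcompact_of_locallyCompact (T : Type u) [TopologicalSpace T] [T2Space T]
    [LocallyCompactSpace T] : Subcompact T := by
  classical
  rcases isEmpty_or_nonempty T with h | h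
  · haveI : Finite T := Finite.of_subsingleton
    exact ⟨T, ‹_›, inferInstance, inferInstance, id, continuous_id, Function.bijective_id⟩
  obtain ⟨t0⟩ := h
  set T' := ({t0}ᶜ : Set T) with hT'
  haveI : LocallyCompactSpace T' := (isOpen_compl_singleton).locallyCompactSpace
  refine ⟨OnePoint T', inferInstance, inferInstance, inferInstance,
    fun t => if h : t = t0 then OnePoint.infty else ((⟨t, h⟩ : T') : OnePoint T'), ?_, ?_, ?_⟩
  · rw [continuous_def]
    intro V hV
    by_cases hinf : OnePoint.infty ∈ V
    · obtain ⟨hK, -⟩ := (OnePoint.isOpen_iff_of_mem' hinf).mp hV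
      have himg : (fun t => if h : t = t0 then OnePoint.infty
          else ((⟨t, h⟩ : T') : OnePoint T')) ⁻¹' V
          = (Subtype.val '' ((((↑) : T' → OnePoint T') ⁻¹' V)ᶜ))ᶜ := by
        ext t
        simp only [Set.mem_preimage]
        by_cases ht : t = t0
        · rw [dif_pos ht]
          simp only [hinf, true_iff, Set.mem_compl_iff]
          rintro ⟨⟨u, hu⟩, -, rfl⟩
          exact hu ht
        · rw [dif_neg ht]
          simp only [Set.mem_compl_iff, Set.mem_image]
          constructor
          · rintro hv ⟨⟨u, hu⟩, hu2, rfl⟩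
            exact hu2 hv
          · intro hv
            by_contra hc
            exact hv ⟨⟨t, ht⟩, hc, rfl⟩
      rw [himg]
      exact ((hK.image continuous_subtype_val).isClosed).isOpen_compl
    · have hU : IsOpen ((((↑) : T' → OnePoint T') ⁻¹' V)) :=
        (OnePoint.isOpen_iff_of_notMem hinf).mp hV
      have himg : (fun t => if h : t = t0 then OnePoint.infty
          else ((⟨t, h⟩ : T') : OnePoint T')) ⁻¹' V
          = Subtype.val '' ((((↑) : T' → OnePoint T') ⁻¹' V)) := by
        ext t
        simp only [Set.mem_preimage]
        by_cases ht : t = t0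
        · rw [dif_pos ht]
          simp only [hinf, false_iff, Set.mem_image]
          rintro ⟨⟨u, hu⟩, -, rfl⟩
          exact hu ht
        · rw [dif_neg ht]
          simp only [Set.mem_image]
          constructor
          · intro hv; exact ⟨⟨t, ht⟩, hv, rfl⟩
          · rintro ⟨⟨u, hu⟩, hu2, rfl⟩; exact hu2
      rw [himg]
      exact (isOpen_compl_singleton).isOpenMap_subtype_val _ hU
  · intro x y hxy
    dsimp only at hxy
    by_cases hx : x = t0 <;> by_cases hy : y = t0
    · rw [hx, hy]
    · rw [dif_pos hx, dif_neg hy] at hxy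
      exact absurd hxy.symm (OnePoint.coe_ne_infty _)
    · rw [dif_neg hx, dif_pos hy] at hxy
      exact absurd hxy (OnePoint.coe_ne_infty _)
    · rw [dif_neg hx, dif_neg hy] at hxy
      exact congrArg Subtype.val (OnePoint.coe_injective hxy)
  · intro y
    rcases y with - | ⟨t, ht⟩
    · exact ⟨t0, dif_pos rfl⟩
    · have ht_ : t ≠ t0 := ht
      exact ⟨t, by simp only [dif_neg ht_]; rfl⟩


section Main

variable {A : Type u} {Xa : A → Type u} [∀ a, TopologicalSpace (Xa a)]

def YSet (pt : ∀ a, Xa a) (S : Set (Σ a, Xa a)) (cA : ↥S → A) (a : A) :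
    Set (Xa a × ((s : ↥S) → Xa (cA s))) :=
  {z | z.2 = (fun s => pt (cA s)) ∨ ((⟨a, z.1⟩ : Σ b, Xa b) ∈ S ∧
      ∀ t : ↥S, (t : Σ b, Xa b) ≠ ⟨a, z.1⟩ → z.2 t = pt (cA t))}

open scoped Classical in
noncomputable def delta (pt : ∀ a, Xa a) {S : Set (Σ a, Xa a)} (cA : ↥S → A)
    (s : ↥S) (w : Xa (cA s)) : (t : ↥S) → Xa (cA t) :=
  fun t => if h : s = t then h ▸ w else pt (cA t)

set_option linter.unusedSectionVars false

theorem delta_self (pt : ∀ a, Xa a) {S : Set (Σ a, Xa a)} (cA : ↥S → A)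
    (s : ↥S) (w : Xa (cA s)) : delta pt cA s w s = w := by
  simp [delta]

theorem delta_ne (pt : ∀ a, Xa a) {S : Set (Σ a, Xa a)} (cA : ↥S → A)
    {s t : ↥S} (w : Xa (cA s)) (h : s ≠ t) : delta pt cA s w t = pt (cA t) := by
  simp [delta, h]

variable (S : Set (Σ a, Xa a)) (cA : ↥S → A)

abbrev SigA : Type u := Σ a : A, {v : Xa a // (⟨a, v⟩ : Σ b, Xa b) ∉ S}

abbrev Gset : Type u := {a : A // a ∉ Set.range cA}

abbrev SigG : Type u := Σ g : Gset S cA, {v : Xa g.1 // (⟨g.1, v⟩ : Σ b, Xa b) ∉ S}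

abbrev SigS : Type u := Σ s : ↥S, Xa (cA s)

variable (pt : ∀ a, Xa a)

abbrev Tt : Type u := Σ g : Gset S cA, ↥(YSet pt S cA g.1)

/-- membership of the spare point -/
theorem mem_YSet_spare (s : ↥S) (w : Xa (cA s)) :
    ((s : Σ b, Xa b).2, delta pt cA s w) ∈ YSet pt S cA (s : Σ b, Xa b).1 := by
  refine Or.inr ⟨?_, ?_⟩
  · exact s.2
  · intro t ht
    refine delta_ne pt cA w (fun h => ht ?_)
    rw [← h]
  -- note: ⟨s.1.1, s.1.2⟩ = s.1 by eta

def psi (hnotS : ∀ (s : ↥S) (x : Xa (cA s)), (⟨cA s, x⟩ : Σ a, Xa a) ∉ S) :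
    SigG S cA ⊕ SigS S cA → SigA S :=
  Sum.elim (fun x => ⟨x.1.1, x.2⟩) (fun x => ⟨cA x.1, ⟨x.2, hnotS x.1 x.2⟩⟩)

noncomputable def Phi (hGB : ∀ s : ↥S, (s : Σ b, Xa b).1 ∉ Set.range cA) :
    SigG S cA ⊕ SigS S cA → Tt S cA pt :=
  Sum.elim (fun x => ⟨x.1, ⟨(x.2.1, fun s => pt (cA s)), Or.inl rfl⟩⟩)
    (fun x => ⟨⟨(x.1 : Σ b, Xa b).1, hGB x.1⟩,
      ⟨((x.1 : Σ b, Xa b).2, delta pt cA x.1 x.2), mem_YSet_spare S cA pt x.1 x.2⟩⟩)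

def g1 : SigA S → ↥(Sᶜ) := fun x => ⟨⟨x.1, x.2.1⟩, x.2.2⟩

theorem continuous_g1 : Continuous (g1 S) := by
  apply continuous_sigma
  intro a
  exact Continuous.subtype_mk (continuous_sigmaMk.comp continuous_subtype_val) _

theorem bijective_g1 : Function.Bijective (g1 S) := by
  constructor
  · rintro ⟨a, v, hv⟩ ⟨a', v', hv'⟩ h
    have h' : (⟨a, v⟩ : Σ b, Xa b) = ⟨a', v'⟩ := congrArg Subtype.val h
    obtain ⟨rfl, h2⟩ := Sigma.mk.inj_iff.mp h'
    obtain rfl := eq_of_heq h2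
    rfl
  · rintro ⟨⟨a, v⟩, hv⟩
    exact ⟨⟨a, ⟨v, hv⟩⟩, rfl⟩

theorem isOpenMap_g1 : IsOpenMap (g1 S) := by
  rw [isOpenMap_sigma]
  intro a
  intro U hU
  obtain ⟨V, hV, rfl⟩ := isOpen_induced_iff.mp hU
  have himg : (fun v => g1 S ⟨a, v⟩) '' (Subtype.val ⁻¹' V)
      = Subtype.val ⁻¹' (Sigma.mk a '' V) := by
    ext y
    constructor
    · rintro ⟨⟨w, hw⟩, hw2, rfl⟩
      exact ⟨w, hw2, rfl⟩
    · rintro ⟨w, hw, hwy⟩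
      refine ⟨⟨w, ?_⟩, hw, Subtype.ext hwy⟩
      rw [show (⟨a, w⟩ : Σ b, Xa b) = y.1 from hwy]
      exact y.2
  rw [himg]
  exact (isOpenMap_sigmaMk _ hV).preimage continuous_subtype_val

theorem continuous_psi (hnotS : ∀ (s : ↥S) (x : Xa (cA s)), (⟨cA s, x⟩ : Σ a, Xa a) ∉ S) :
    Continuous (psi S cA hnotS) := by
  have h1 : Continuous (fun x : SigG S cA => (⟨x.1.1, x.2⟩ : SigA S)) := by
    refine continuous_sigma fun g => ?_
    exact continuous_sigmaMk (σ := fun a : A => {v : Xa a // (⟨a, v⟩ : Σ b, Xa b) ∉ S})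
  have h2 : Continuous (fun x : SigS S cA => (⟨cA x.1, ⟨x.2, hnotS x.1 x.2⟩⟩ : SigA S)) := by
    refine continuous_sigma fun s => ?_
    show Continuous fun w : Xa (cA s) => (Sigma.mk (β := fun a : A => {v : Xa a // (⟨a, v⟩ : Σ b, Xa b) ∉ S}) (cA s)
      (⟨w, hnotS s w⟩ : {v : Xa (cA s) // (⟨cA s, v⟩ : Σ b, Xa b) ∉ S}))
    exact (continuous_sigmaMk (σ := fun a : A => {v : Xa a // (⟨a, v⟩ : Σ b, Xa b) ∉ S})).comp (continuous_id.subtype_mk _)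
  exact Continuous.sumElim h1 h2

theorem isOpenMap_psi (hnotS : ∀ (s : ↥S) (x : Xa (cA s)), (⟨cA s, x⟩ : Σ a, Xa a) ∉ S) :
    IsOpenMap (psi S cA hnotS) := by
  apply IsOpenMap.sumElim
  · rw [isOpenMap_sigma]
    intro g
    exact isOpenMap_sigmaMk (σ := fun a : A => {v : Xa a // (⟨a, v⟩ : Σ b, Xa b) ∉ S})
  · rw [isOpenMap_sigma]
    intro s
    have : (fun (w : Xa (cA s)) => (⟨cA s, ⟨w, hnotS s w⟩⟩ : SigA S))
        = (Sigma.mk (cA s)) ∘ (fun w => (⟨w, hnotS s w⟩ : {v : Xa (cA s) // (⟨cA s, v⟩ : Σ b, Xa b) ∉ S})) := rfl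
    rw [this]
    apply IsOpenMap.comp (isOpenMap_sigmaMk (σ := fun a : A => {v : Xa a // (⟨a, v⟩ : Σ b, Xa b) ∉ S}))
    intro U hU
    have : (fun w => (⟨w, hnotS s w⟩ : {v : Xa (cA s) // (⟨cA s, v⟩ : Σ b, Xa b) ∉ S})) '' U
        = Subtype.val ⁻¹' U := by
      ext ⟨w, hw⟩
      simp only [Set.mem_image, Set.mem_preimage]
      constructor
      · rintro ⟨u, hu, huw⟩
        obtain rfl : u = w := congrArg Subtype.val huw
        exact hu
      · intro hw2
        exact ⟨w, hw2, rfl⟩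
    rw [this]
    exact hU.preimage continuous_subtype_val

theorem bijective_psi (hnotS : ∀ (s : ↥S) (x : Xa (cA s)), (⟨cA s, x⟩ : Σ a, Xa a) ∉ S)
    (hcInj : Function.Injective cA) : Function.Bijective (psi S cA hnotS) := by
  constructor
  · rintro (⟨g, v⟩ | ⟨s, w⟩) (⟨g', v'⟩ | ⟨s', w'⟩) h <;> simp only [psi, Sum.elim_inl, Sum.elim_inr] at h
    · obtain ⟨h1, h2⟩ := Sigma.mk.inj_iff.mp h
      obtain rfl : g = g' := Subtype.ext h1
      obtain rfl := eq_of_heq h2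
      rfl
    · obtain ⟨h1, -⟩ := Sigma.mk.inj_iff.mp h
      exact absurd ⟨s', h1.symm⟩ g.2
    · obtain ⟨h1, -⟩ := Sigma.mk.inj_iff.mp h
      exact absurd ⟨s, h1⟩ g'.2
    · obtain ⟨h1, h2⟩ := Sigma.mk.inj_iff.mp h
      obtain rfl : s = s' := hcInj h1
      obtain h3 := eq_of_heq h2
      obtain rfl : w = w' := congrArg Subtype.val h3
      rfl
  · rintro ⟨a, ⟨v, hv⟩⟩
    by_cases h : a ∈ Set.range cA
    · obtain ⟨s, rfl⟩ := h
      exact ⟨Sum.inr ⟨s, v⟩, rfl⟩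
    · exact ⟨Sum.inl ⟨⟨a, h⟩, ⟨v, hv⟩⟩, rfl⟩


section Phi
variable [∀ a, T2Space (Xa a)]

theorem isClosed_YSet' (a : A) : IsClosed (YSet pt S cA a) := by
  rw [← isOpen_compl_iff]
  rw [isOpen_iff_mem_nhds]
  intro z hz
  simp only [YSet, mem_compl_iff, mem_setOf_eq, not_or, not_and, not_forall] at hz
  obtain ⟨h1, h2⟩ := hz
  have hex : ∃ t₁ : ↥S, ((t₁ : Σ b, Xa b) ≠ ⟨a, z.1⟩) ∧ z.2 t₁ ≠ pt (cA t₁) := by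
    have hs0 : ∃ s₀ : ↥S, z.2 s₀ ≠ pt (cA s₀) := by
      by_contra h
      push_neg at h
      exact h1 (funext h)
    obtain ⟨s₀, hs₀⟩ := hs0
    by_cases hc : (s₀ : Σ b, Xa b) = ⟨a, z.1⟩
    · have hmem : (⟨a, z.1⟩ : Σ b, Xa b) ∈ S := hc ▸ s₀.2
      obtain ⟨t, ht⟩ := h2 hmem
      push_neg at ht
      exact ⟨t, ht.1, ht.2⟩
    · exact ⟨s₀, hc, hs₀⟩
  obtain ⟨t₁, ht₁, hbad⟩ := hex
  refine mem_nhds_iff.mpr ⟨{w | w.2 t₁ ≠ pt (cA t₁) ∧ (⟨a, w.1⟩ : Σ b, Xa b) ≠ (t₁ : Σ b, Xa b)},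
    ?_, ?_, ⟨hbad, fun h => ht₁ h.symm⟩⟩
  · rintro w ⟨hw1, hw2⟩
    simp only [YSet, mem_compl_iff, mem_setOf_eq, not_or]
    constructor
    · intro h
      exact hw1 (congrFun h t₁)
    · rintro ⟨-, hall⟩
      exact hw1 (hall t₁ (fun h => hw2 h.symm))
  · apply IsOpen.inter
    · exact (isOpen_compl_singleton.preimage ((continuous_apply t₁).comp continuous_snd))
    · exact (isOpen_compl_singleton.preimage (continuous_sigmaMk.comp continuous_fst))

theorem continuous_delta' (s : ↥S) : Continuous (delta pt cA s) := by
  apply continuous_pi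
  intro t
  by_cases h : s = t
  · subst h
    simp only [delta_self]
    exact continuous_id
  · simp only [delta_ne pt cA _ h]
    exact continuous_const

theorem continuous_Phi (hGB : ∀ s : ↥S, (s : Σ b, Xa b).1 ∉ Set.range cA) :
    Continuous (Phi S cA pt hGB) := by
  have h1 : Continuous (fun x : SigG S cA =>
      (⟨x.1, ⟨(x.2.1, fun s => pt (cA s)), Or.inl rfl⟩⟩ : Tt S cA pt)) := by
    refine continuous_sigma fun g => ?_
    exact (continuous_sigmaMk (σ := fun g : Gset S cA => ↥(YSet pt S cA g.1))).comp
      (Continuous.subtype_mk (p := (· ∈ YSet pt S cA g.1)) ((continuous_subtype_val (p := fun v : Xa g.1 => (⟨g.1, v⟩ : Σ b, Xa b) ∉ S)).prodMk (continuous_const : Continuous fun _ : {v : Xa g.1 // (⟨g.1, v⟩ : Σ b, Xa b) ∉ S} => fun s : ↥S => pt (cA s))) (fun _ => Or.inl rfl))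
  have h2 : Continuous (fun x : SigS S cA =>
      (⟨⟨(x.1 : Σ b, Xa b).1, hGB x.1⟩,
        ⟨((x.1 : Σ b, Xa b).2, delta pt cA x.1 x.2), mem_YSet_spare S cA pt x.1 x.2⟩⟩ :
          Tt S cA pt)) := by
    refine continuous_sigma fun s => ?_
    have hsub : Continuous fun w : Xa (cA s) =>
        (⟨((s : Σ b, Xa b).2, delta pt cA s w), mem_YSet_spare S cA pt s w⟩ :
          ↥(YSet pt S cA (s : Σ b, Xa b).1)) :=
      Continuous.subtype_mk (continuous_const.prodMk (continuous_delta' S cA pt s)) _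
    exact (continuous_sigmaMk (σ := fun g : Gset S cA => ↥(YSet pt S cA g.1))
      (i := ⟨(s : Σ b, Xa b).1, hGB s⟩)).comp hsub
  exact Continuous.sumElim h1 h2

theorem bijective_Phi (hGB : ∀ s : ↥S, (s : Σ b, Xa b).1 ∉ Set.range cA) :
    Function.Bijective (Phi S cA pt hGB) := by
  constructor
  · rintro (⟨g, v⟩ | ⟨s, w⟩) (⟨g', v'⟩ | ⟨s', w'⟩) h
    · have hr := congrArg (fun y : Tt S cA pt => (⟨y.1.1, y.2.1.1⟩ : Σ b, Xa b)) h
      simp only [Phi, Sum.elim_inl] at hr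
      obtain ⟨h1, h2⟩ := Sigma.mk.inj_iff.mp hr
      obtain rfl : g = g' := Subtype.ext h1
      obtain rfl : v = v' := Subtype.ext (eq_of_heq h2)
      rfl
    · have hr := congrArg (fun y : Tt S cA pt => (⟨y.1.1, y.2.1.1⟩ : Σ b, Xa b)) h
      simp only [Phi, Sum.elim_inl, Sum.elim_inr] at hr
      have hs2 : (⟨(s' : Σ b, Xa b).1, (s' : Σ b, Xa b).2⟩ : Σ b, Xa b) ∈ S := s'.2
      rw [← hr] at hs2
      exact absurd hs2 v.2
    · have hr := congrArg (fun y : Tt S cA pt => (⟨y.1.1, y.2.1.1⟩ : Σ b, Xa b)) h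
      simp only [Phi, Sum.elim_inl, Sum.elim_inr] at hr
      have hs2 : (⟨(s : Σ b, Xa b).1, (s : Σ b, Xa b).2⟩ : Σ b, Xa b) ∈ S := s.2
      rw [hr] at hs2
      exact absurd hs2 v'.2
    · have hr := congrArg (fun y : Tt S cA pt => (⟨y.1.1, y.2.1.1⟩ : Σ b, Xa b)) h
      simp only [Phi, Sum.elim_inr] at hr
      have hss : s = s' := Subtype.ext hr
      subst hss
      have hr2 := congrArg (fun y : Tt S cA pt => y.2.1.2) h
      simp only [Phi, Sum.elim_inr] at hr2
      have hw := congrFun hr2 s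
      rw [delta_self, delta_self] at hw
      rw [hw]
  · rintro ⟨⟨a, hGa⟩, ⟨⟨w, q⟩, hq⟩⟩
    simp only [YSet, mem_setOf_eq] at hq
    by_cases hmem : (⟨a, w⟩ : Σ b, Xa b) ∈ S
    · refine ⟨Sum.inr ⟨⟨⟨a, w⟩, hmem⟩, q ⟨⟨a, w⟩, hmem⟩⟩, ?_⟩
      have hdq : delta pt cA ⟨⟨a, w⟩, hmem⟩ (q ⟨⟨a, w⟩, hmem⟩) = q := by
        funext t
        by_cases h : (⟨⟨a, w⟩, hmem⟩ : ↥S) = t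
        · subst h
          rw [delta_self]
        · rw [delta_ne pt cA _ h]
          rcases hq with h1 | ⟨-, h2⟩
          · exact (congrFun h1 t).symm
          · refine (h2 t ?_).symm
            intro ht
            exact h (Subtype.ext ht.symm)
      show (⟨⟨a, hGB ⟨⟨a, w⟩, hmem⟩⟩,
        ⟨(w, delta pt cA ⟨⟨a, w⟩, hmem⟩ (q ⟨⟨a, w⟩, hmem⟩)),
          mem_YSet_spare S cA pt ⟨⟨a, w⟩, hmem⟩ _⟩⟩ : Tt S cA pt) = _
      refine Sigma.ext rfl (heq_of_eq (Subtype.ext ?_))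
      show ((w, delta pt cA ⟨⟨a, w⟩, hmem⟩ (q ⟨⟨a, w⟩, hmem⟩)) : _ × _) = (w, q)
      rw [hdq]
    · have hst : q = fun s => pt (cA s) := by
        rcases hq with h1 | ⟨hmem', -⟩
        · exact h1
        · exact absurd hmem' hmem
      refine ⟨Sum.inl ⟨⟨a, hGa⟩, ⟨w, hmem⟩⟩, ?_⟩
      show (⟨⟨a, hGa⟩, ⟨(w, fun s => pt (cA s)), Or.inl rfl⟩⟩ : Tt S cA pt) = _
      refine Sigma.ext rfl (heq_of_eq (Subtype.ext ?_))
      show ((w, fun s => pt (cA s)) : _ × _) = (w, q)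
      rw [hst]

end Phi
end Main



/-- a topological sum of `τ` many nonempty compact Hausdorff spaces is
almost `a_{<τ}`-subcompact: removing fewer than `τ` points leaves a subcompact space. -/
theorem stmt_7 (τ : Cardinal.{u}) (hτ : ℵ₀ ≤ τ)
    (A : Type u) (hA : #A = τ)
    (Xa : A → Type u) [∀ a, TopologicalSpace (Xa a)] [∀ a, CompactSpace (Xa a)]
    [∀ a, T2Space (Xa a)] (hne : ∀ a, Nonempty (Xa a)) :
    ∀ S : Set (Σ a, Xa a), #S < τ → Subcompact ↥(Sᶜ) := by

  intro S hS
  classical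
  set B : Set A := Sigma.fst '' S with hB
  have hBlt : Cardinal.mk B < τ := lt_of_le_of_lt Cardinal.mk_image_le hS
  have hBc : τ ≤ Cardinal.mk ↥(Bᶜ) := by
    by_contra hlt
    push_neg at hlt
    have hsum := Cardinal.mk_sum_compl B
    rw [hA] at hsum
    have := Cardinal.add_lt_of_lt hτ hBlt hlt
    rw [hsum] at this
    exact lt_irrefl _ this
  have hSle : Cardinal.mk ↥S ≤ Cardinal.mk ↥(Bᶜ) := le_trans hS.le hBc
  obtain ⟨e⟩ := Cardinal.le_def _ _ |>.mp hSle
  set cA : ↥S → A := fun s => (e s).1 with hcA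
  have hcInj : Function.Injective cA := fun s s' h => e.injective (Subtype.ext h)
  have hnotS : ∀ (s : ↥S) (x : Xa (cA s)), (⟨cA s, x⟩ : Σ a, Xa a) ∉ S := by
    intro s x hx
    exact (e s).2 ⟨⟨cA s, x⟩, hx, rfl⟩
  have hGB : ∀ s : ↥S, (s : Σ b, Xa b).1 ∉ Set.range cA := by
    rintro s ⟨s', hs'⟩
    apply (e s').2
    show cA s' ∈ B
    rw [hs']
    exact ⟨(s : Σ b, Xa b), s.2, rfl⟩
  set pt : ∀ a, Xa a := fun a => (hne a).some with hpt
  haveI hYc : ∀ g : Gset S cA, CompactSpace (↥(YSet pt S cA g.1)) := by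
    intro g
    exact isCompact_iff_compactSpace.mp ((isClosed_YSet' S cA pt g.1).isCompact)
  haveI hYlc : ∀ g : Gset S cA, LocallyCompactSpace (↥(YSet pt S cA g.1)) := by
    intro g
    infer_instance
  haveI : LocallyCompactSpace (Tt S cA pt) := sigma_locallyCompactSpace
  have hT : Subcompact (Tt S cA pt) := subcompact_of_locallyCompact _
  have h3 : Subcompact (SigG S cA ⊕ SigS S cA) :=
    Subcompact.of_condensation _ (continuous_Phi S cA pt hGB) (bijective_Phi S cA pt hGB) hT
  have h4 : Subcompact (SigA S) := by
    have hom := Equiv.toHomeomorphOfContinuousOpen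
      (Equiv.ofBijective _ (bijective_psi S cA hnotS hcInj)) (continuous_psi S cA hnotS)
      (isOpenMap_psi S cA hnotS)
    exact Subcompact.of_condensation hom.symm hom.symm.continuous hom.symm.bijective h3
  have hom1 := Equiv.toHomeomorphOfContinuousOpen
    (Equiv.ofBijective _ (bijective_g1 S)) (continuous_g1 S) (isOpenMap_g1 S)
  exact Subcompact.of_condensation hom1.symm hom1.symm.continuous hom1.symm.bijective h4
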